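/- Let (μ,σ) be an SDE on an open set M ⊆ ℝⁿ and let V₁ = (Y₁,C₁,τ₁,σᵀ·∇k₁) and V₂ = (Y₂,C₂,τ₂,σᵀ·∇k₂) be infinitesimal symmetries of (μ,σ) (i.e. satisfying the determining equations) whose characterizing functions k₁, k₂: M → ℝ are L-harmonic, i.e. L(k₁) = 0 and L(k₂) = 0 (Doob symmetries). Then L( Y₁(k₂) − Y₂(k₁) ) = 0, i.e. the characterizing function Y₁(k₂) − Y₂(k₁) of the bracket [V₁,V₂] is also L-harmonic; hence the bracket of two Doob symmetries is a Doob symmetry. -/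

import Mathlib

open Matrix

/-- Partial derivative `∂ᵢ f` of a scalar function on `ℝⁿ`. -/
noncomputable def pd {n : ℕ} (i : Fin n) (f : (Fin n → ℝ) → ℝ) (x : Fin n → ℝ) : ℝ :=
  fderiv ℝ f x (Pi.single i 1)

/-- Action `Y(f) = Yⁱ ∂ᵢ f` of a vector field on a scalar function. -/
noncomputable def vfd {n : ℕ} (Y : (Fin n → ℝ) → Fin n → ℝ)
    (f : (Fin n → ℝ) → ℝ) (x : Fin n → ℝ) : ℝ :=
  ∑ j, Y x j * pd j f x

/-- Infinitesimal generator `L(f) = ½ (σσᵀ)^{ij} ∂ᵢ∂ⱼ f + μⁱ ∂ᵢ f` of the SDE `(μ,σ)`. -/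
noncomputable def gen {n m : ℕ} (μ : (Fin n → ℝ) → Fin n → ℝ)
    (σ : (Fin n → ℝ) → Matrix (Fin n) (Fin m) ℝ)
    (f : (Fin n → ℝ) → ℝ) (x : Fin n → ℝ) : ℝ :=
  (1 / 2) * ∑ i, ∑ j, (∑ α, σ x i α * σ x j α) * pd i (pd j f) x
    + ∑ i, μ x i * pd i f x

/-- Entrywise smoothness of a vector-valued function on a set. -/
def SmoothVec {n k : ℕ} (M : Set (Fin n → ℝ)) (f : (Fin n → ℝ) → Fin k → ℝ) : Prop :=
  ∀ i, ContDiffOn ℝ (⊤ : ℕ∞) (fun x => f x i) M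

/-- Entrywise smoothness of a matrix-valued function on a set. -/
def SmoothMat {n k l : ℕ} (M : Set (Fin n → ℝ))
    (f : (Fin n → ℝ) → Matrix (Fin k) (Fin l) ℝ) : Prop :=
  ∀ i j, ContDiffOn ℝ (⊤ : ℕ∞) (fun x => f x i j) M

/-- The determining equations: `V = (Y,C,τ,H)` is an infinitesimal symmetry of the SDE
`(μ,σ)` on `M`, i.e. `Y(μ) − L(Y) − σ·H + τμ = 0` and `[Y,σ] + ½τσ + σ·C = 0` on `M`. -/
def DetEqs {n m : ℕ} (M : Set (Fin n → ℝ))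
    (μ : (Fin n → ℝ) → Fin n → ℝ) (σ : (Fin n → ℝ) → Matrix (Fin n) (Fin m) ℝ)
    (Y : (Fin n → ℝ) → Fin n → ℝ) (C : (Fin n → ℝ) → Matrix (Fin m) (Fin m) ℝ)
    (τ : (Fin n → ℝ) → ℝ) (H : (Fin n → ℝ) → Fin m → ℝ) : Prop :=
  (∀ x ∈ M, ∀ i, vfd Y (fun y => μ y i) x - gen μ σ (fun y => Y y i) x
      - (∑ α, σ x i α * H x α) + τ x * μ x i = 0) ∧
  (∀ x ∈ M, ∀ i, ∀ α, vfd Y (fun y => σ y i α) x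
      - (∑ j, σ x j α * pd j (fun y => Y y i) x)
      + (1 / 2) * τ x * σ x i α + (∑ β, σ x i β * C x β α) = 0)

section Helpers
variable {n : ℕ} {M : Set (Fin n → ℝ)} {f g : (Fin n → ℝ) → ℝ} {x : Fin n → ℝ} {i j : Fin n}

lemma cdAt (hM : IsOpen M) (hf : ContDiffOn ℝ (⊤ : ℕ∞) f M) (hx : x ∈ M) :
    ContDiffAt ℝ (⊤ : ℕ∞) f x := hf.contDiffAt (hM.mem_nhds hx)

lemma dAt (hM : IsOpen M) (hf : ContDiffOn ℝ (⊤ : ℕ∞) f M) (hx : x ∈ M) :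
    DifferentiableAt ℝ f x := (cdAt hM hf hx).differentiableAt (by simp)

lemma cd_pd (hM : IsOpen M) (hf : ContDiffOn ℝ (⊤ : ℕ∞) f M) :
    ContDiffOn ℝ (⊤ : ℕ∞) (pd i f) M := by
  intro x hx
  have h1 : ContDiffAt ℝ (⊤ : ℕ∞) (fderiv ℝ f) x :=
    (cdAt hM hf hx).fderiv_right (by norm_cast)
  exact (h1.clm_apply contDiffAt_const).contDiffWithinAt

lemma pd_congr_nhds (h : f =ᶠ[nhds x] g) : pd i f x = pd i g x := by
  simp [pd, h.fderiv_eq]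

lemma pd_congr_on (hM : IsOpen M) (h : ∀ y ∈ M, f y = g y) (hx : x ∈ M) :
    pd i f x = pd i g x :=
  pd_congr_nhds (Filter.eventuallyEq_of_mem (hM.mem_nhds hx) h)

lemma pd_zero_on (hM : IsOpen M) (h : ∀ y ∈ M, f y = 0) (hx : x ∈ M) :
    pd i f x = 0 := by
  rw [pd_congr_on hM h hx (g := fun _ => 0)]; simp [pd]

lemma pd_add (hf : DifferentiableAt ℝ f x) (hg : DifferentiableAt ℝ g x) :
    pd i (fun y => f y + g y) x = pd i f x + pd i g x := by
  simp [pd, fderiv_fun_add hf hg]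

lemma pd_sub (hf : DifferentiableAt ℝ f x) (hg : DifferentiableAt ℝ g x) :
    pd i (fun y => f y - g y) x = pd i f x - pd i g x := by
  simp [pd, fderiv_fun_sub hf hg]

lemma pd_mul (hf : DifferentiableAt ℝ f x) (hg : DifferentiableAt ℝ g x) :
    pd i (fun y => f y * g y) x = pd i f x * g x + f x * pd i g x := by
  simp [pd, fderiv_fun_mul hf hg]; ring

lemma pd_const_mul (c : ℝ) (hf : DifferentiableAt ℝ f x) :
    pd i (fun y => c * f y) x = c * pd i f x := by
  simp [pd, fderiv_const_mul hf]

lemma pd_sum {κ : Type*} (s : Finset κ) (F : κ → (Fin n → ℝ) → ℝ)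
    (hF : ∀ a ∈ s, DifferentiableAt ℝ (F a) x) :
    pd i (fun y => ∑ a ∈ s, F a y) x = ∑ a ∈ s, pd i (F a) x := by
  simp [pd, fderiv_fun_sum hF]

lemma pd_pd_eq (hd : DifferentiableAt ℝ (fderiv ℝ f) x) :
    pd i (pd j f) x = fderiv ℝ (fderiv ℝ f) x (Pi.single i 1) (Pi.single j 1) := by
  unfold pd
  rw [fderiv_clm_apply hd (differentiableAt_const _)]
  simp

lemma pd_comm (hM : IsOpen M) (hf : ContDiffOn ℝ (⊤ : ℕ∞) f M) (hx : x ∈ M) :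
    pd i (pd j f) x = pd j (pd i f) x := by
  have hca := cdAt hM hf hx
  have hd : DifferentiableAt ℝ (fderiv ℝ f) x :=
    (hca.fderiv_right (m := (⊤ : ℕ∞)) (by norm_cast)).differentiableAt (by simp)
  rw [pd_pd_eq hd, pd_pd_eq hd]
  exact hca.isSymmSndFDerivAt (by rw [minSmoothness_of_isRCLikeNormedField]; exact WithTop.coe_le_coe.mpr le_top) _ _
end Helpers

section KeyTest
variable {n m : ℕ}

-- smoothness of vfd
lemma cd_vfd {M : Set (Fin n → ℝ)} (hM : IsOpen M)
    (Y : (Fin n → ℝ) → Fin n → ℝ) (k : (Fin n → ℝ) → ℝ)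
    (hY : ∀ i, ContDiffOn ℝ (⊤ : ℕ∞) (fun x => Y x i) M)
    (hk : ContDiffOn ℝ (⊤ : ℕ∞) k M) :
    ContDiffOn ℝ (⊤ : ℕ∞) (fun y => vfd Y k y) M := by
  unfold vfd
  exact ContDiffOn.sum fun j _ => (hY j).mul (cd_pd hM hk)

-- first derivative of vfd
lemma pd_vfd {M : Set (Fin n → ℝ)} (hM : IsOpen M)
    (Y : (Fin n → ℝ) → Fin n → ℝ) (k : (Fin n → ℝ) → ℝ)
    (hY : ∀ i, ContDiffOn ℝ (⊤ : ℕ∞) (fun x => Y x i) M)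
    (hk : ContDiffOn ℝ (⊤ : ℕ∞) k M) :
    ∀ y ∈ M, ∀ j, pd j (fun z => vfd Y k z) y
      = ∑ p, (pd j (fun z => Y z p) y * pd p k y + Y y p * pd j (pd p k) y) := by
  intro y hy j
  unfold vfd
  rw [pd_sum Finset.univ (fun p z => Y z p * pd p k z)
    (fun p _ => ((dAt hM (hY p) hy).mul (dAt hM (cd_pd hM hk) hy)))]
  exact Finset.sum_congr rfl fun p _ =>
    pd_mul (dAt hM (hY p) hy) (dAt hM (cd_pd hM hk) hy)

-- second derivative of vfd
lemma pd_pd_vfd {M : Set (Fin n → ℝ)} (hM : IsOpen M)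
    (Y : (Fin n → ℝ) → Fin n → ℝ) (k : (Fin n → ℝ) → ℝ)
    (hY : ∀ i, ContDiffOn ℝ (⊤ : ℕ∞) (fun x => Y x i) M)
    (hk : ContDiffOn ℝ (⊤ : ℕ∞) k M) {x : Fin n → ℝ} (hx : x ∈ M) (i j : Fin n) :
    pd i (pd j (fun z => vfd Y k z)) x
      = ∑ p, (pd i (pd j (fun z => Y z p)) x * pd p k x
          + pd j (fun z => Y z p) x * pd i (pd p k) x
          + pd i (fun z => Y z p) x * pd j (pd p k) x
          + Y x p * pd i (pd j (pd p k)) x) := by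
  have h1 : pd i (pd j (fun z => vfd Y k z)) x
      = pd i (fun y => ∑ p, (pd j (fun z => Y z p) y * pd p k y + Y y p * pd j (pd p k) y)) x :=
    pd_congr_on hM (fun y hy => pd_vfd hM Y k hY hk y hy j) hx
  rw [h1]
  have d1 : ∀ p : Fin n, DifferentiableAt ℝ (fun y => pd j (fun z => Y z p) y * pd p k y) x :=
    fun p => (dAt hM (cd_pd hM (hY p)) hx).mul (dAt hM (cd_pd hM hk) hx)
  have d2 : ∀ p : Fin n, DifferentiableAt ℝ (fun y => Y y p * pd j (pd p k) y) x :=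
    fun p => (dAt hM (hY p) hx).mul (dAt hM (cd_pd hM (cd_pd hM hk)) hx)
  rw [pd_sum Finset.univ _ (fun p _ => (d1 p).fun_add (d2 p))]
  refine Finset.sum_congr rfl fun p _ => ?_
  rw [pd_add (d1 p) (d2 p),
    pd_mul (dAt hM (cd_pd hM (hY p)) hx) (dAt hM (cd_pd hM hk) hx),
    pd_mul (dAt hM (hY p) hx) (dAt hM (cd_pd hM (cd_pd hM hk)) hx)]
  ring
end KeyTest

section GenDeriv
variable {n m : ℕ}

-- derivative of the generator applied to k, at a point of M
lemma pd_gen {M : Set (Fin n → ℝ)} (hM : IsOpen M)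
    (μ : (Fin n → ℝ) → Fin n → ℝ) (σ : (Fin n → ℝ) → Matrix (Fin n) (Fin m) ℝ)
    (hμ : ∀ i, ContDiffOn ℝ (⊤ : ℕ∞) (fun x => μ x i) M)
    (hσ : ∀ i j, ContDiffOn ℝ (⊤ : ℕ∞) (fun x => σ x i j) M)
    (k : (Fin n → ℝ) → ℝ) (hk : ContDiffOn ℝ (⊤ : ℕ∞) k M)
    {x : Fin n → ℝ} (hx : x ∈ M) (p : Fin n) :
    pd p (fun y => gen μ σ k y) x
      = (1/2) * (∑ i, ∑ j,
          ((∑ α, (pd p (fun y => σ y i α) x * σ x j α + σ x i α * pd p (fun y => σ y j α) x))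
              * pd i (pd j k) x
            + (∑ α, σ x i α * σ x j α) * pd p (pd i (pd j k)) x))
        + ∑ i, (pd p (fun y => μ y i) x * pd i k x + μ x i * pd p (pd i k) x) := by
  have cdA : ∀ i j : Fin n, ContDiffOn ℝ (⊤ : ℕ∞) (fun y => ∑ α, σ y i α * σ y j α) M :=
    fun i j => ContDiffOn.sum fun α _ => (hσ i α).mul (hσ j α)
  have cdD2 : ∀ i j : Fin n, ContDiffOn ℝ (⊤ : ℕ∞) (pd i (pd j k)) M :=
    fun i j => cd_pd hM (cd_pd hM hk)
  have dP1 : ∀ i j : Fin n, DifferentiableAt ℝ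
      (fun y => (∑ α, σ y i α * σ y j α) * pd i (pd j k) y) x :=
    fun i j => (dAt hM (cdA i j) hx).mul (dAt hM (cdD2 i j) hx)
  have dS1 : ∀ i : Fin n, DifferentiableAt ℝ
      (fun y => ∑ j, (∑ α, σ y i α * σ y j α) * pd i (pd j k) y) x :=
    fun i => DifferentiableAt.fun_sum fun j _ => dP1 i j
  have dSS : DifferentiableAt ℝ
      (fun y => ∑ i, ∑ j, (∑ α, σ y i α * σ y j α) * pd i (pd j k) y) x :=
    DifferentiableAt.fun_sum fun i _ => dS1 i
  have dP2 : ∀ i : Fin n, DifferentiableAt ℝ (fun y => μ y i * pd i k y) x :=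
    fun i => (dAt hM (hμ i) hx).mul (dAt hM (cd_pd hM hk) hx)
  have dS2 : DifferentiableAt ℝ (fun y => ∑ i, μ y i * pd i k y) x :=
    DifferentiableAt.fun_sum fun i _ => dP2 i
  have h0 : pd p (fun y => gen μ σ k y) x
      = pd p (fun y => (1/2) * ∑ i, ∑ j, (∑ α, σ y i α * σ y j α) * pd i (pd j k) y) x
        + pd p (fun y => ∑ i, μ y i * pd i k y) x := by
    simp only [gen]
    exact pd_add ((differentiableAt_const _).mul dSS) dS2
  rw [h0, pd_const_mul _ dSS,
    pd_sum Finset.univ _ (fun i _ => dS1 i),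
    pd_sum Finset.univ _ (fun i _ => dP2 i)]
  congr 1
  · congr 1
    refine Finset.sum_congr rfl fun i _ => ?_
    rw [pd_sum Finset.univ _ (fun j _ => dP1 i j)]
    refine Finset.sum_congr rfl fun j _ => ?_
    rw [pd_mul (dAt hM (cdA i j) hx) (dAt hM (cdD2 i j) hx),
      pd_sum Finset.univ _ (fun α _ => (dAt hM (hσ i α) hx).fun_mul (dAt hM (hσ j α) hx))]
    congr 1
    congr 1
    exact Finset.sum_congr rfl fun α _ =>
      pd_mul (dAt hM (hσ i α) hx) (dAt hM (hσ j α) hx)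
  · exact Finset.sum_congr rfl fun i _ =>
      pd_mul (dAt hM (hμ i) hx) (dAt hM (cd_pd hM hk) hx)
end GenDeriv

lemma swap2 {κ₁ κ₂ : Type*} [Fintype κ₁] [Fintype κ₂] (F : κ₁ → κ₂ → ℝ) :
    ∑ a, ∑ b, F a b = ∑ b, ∑ a, F a b := Finset.sum_comm

lemma swap3 {κ₁ κ₂ κ₃ : Type*} [Fintype κ₁] [Fintype κ₂] [Fintype κ₃]
    (F : κ₁ → κ₂ → κ₃ → ℝ) :
    ∑ a, ∑ b, ∑ c, F a b c = ∑ c, ∑ a, ∑ b, F a b c := by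
  calc ∑ a, ∑ b, ∑ c, F a b c = ∑ a, ∑ c, ∑ b, F a b c :=
        Finset.sum_congr rfl fun a _ => Finset.sum_comm
    _ = ∑ c, ∑ a, ∑ b, F a b c := Finset.sum_comm

lemma swap4 {κ₁ κ₂ κ₃ κ₄ : Type*} [Fintype κ₁] [Fintype κ₂] [Fintype κ₃] [Fintype κ₄]
    (F : κ₁ → κ₂ → κ₃ → κ₄ → ℝ) :
    ∑ a, ∑ b, ∑ c, ∑ d, F a b c d = ∑ d, ∑ a, ∑ b, ∑ c, F a b c d := by
  calc ∑ a, ∑ b, ∑ c, ∑ d, F a b c d = ∑ a, ∑ d, ∑ b, ∑ c, F a b c d :=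
        Finset.sum_congr rfl fun a _ => swap3 _
    _ = ∑ d, ∑ a, ∑ b, ∑ c, F a b c d := Finset.sum_comm

lemma master {n m : ℕ} (s : Fin n → Fin m → ℝ) (u Yx dk dk' : Fin n → ℝ)
    (dY dμ D2 : Fin n → Fin n → ℝ) (ddY D3 : Fin n → Fin n → Fin n → ℝ)
    (dσ : Fin n → Fin n → Fin m → ℝ) (Cx : Fin m → Fin m → ℝ) (τx : ℝ)
    (hD2 : ∀ i q, D2 i q = D2 q i)
    (hD3 : ∀ i j q, D3 i j q = D3 q i j)
    (hC : ∀ α β, Cx β α = - Cx α β)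
    (hE1 : ∀ p, (∑ j, Yx j * dμ j p)
        - ((1/2) * ∑ i, ∑ j, (∑ α, s i α * s j α) * ddY i j p + ∑ i, u i * dY i p)
        - (∑ α, s p α * (∑ q, s q α * dk' q)) + τx * u p = 0)
    (hE2 : ∀ p α, (∑ j, Yx j * dσ j p α) - (∑ j, s j α * dY j p)
        + (1/2) * τx * s p α + (∑ β, s p β * Cx β α) = 0)
    (hF3 : (1/2) * ∑ i, ∑ j, (∑ α, s i α * s j α) * D2 i j + ∑ i, u i * dk i = 0)
    (hF4 : ∀ p, (1/2) * ∑ i, ∑ j, ((∑ α, (dσ p i α * s j α + s i α * dσ p j α)) * D2 i j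
         + (∑ α, s i α * s j α) * D3 p i j)
         + ∑ i, (dμ p i * dk i + u i * D2 p i) = 0) :
    (1/2) * ∑ i, ∑ j, (∑ α, s i α * s j α) *
        (∑ p, (ddY i j p * dk p + dY j p * D2 i p + dY i p * D2 j p + Yx p * D3 i j p))
      + ∑ i, u i * (∑ p, (dY i p * dk p + Yx p * D2 i p))
      = - ∑ α, (∑ q, s q α * dk' q) * (∑ p, s p α * dk p) := by
  have hA : ∀ i j : Fin n, (∑ α, s i α * s j α) = ∑ α, s j α * s i α :=
    fun i j => Finset.sum_congr rfl fun α _ => mul_comm _ _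
  -- Stage 1 : LHS = ∑ p, P p
  have stage1 :
      (1/2) * ∑ i, ∑ j, (∑ α, s i α * s j α) *
          (∑ p, (ddY i j p * dk p + dY j p * D2 i p + dY i p * D2 j p + Yx p * D3 i j p))
        + ∑ i, u i * (∑ p, (dY i p * dk p + Yx p * D2 i p))
      = ∑ p, ((1/2) * (∑ i, ∑ j, (∑ α, s i α * s j α) *
          (ddY i j p * dk p + dY j p * D2 i p + dY i p * D2 j p + Yx p * D3 i j p))
        + ∑ i, u i * (dY i p * dk p + Yx p * D2 i p)) := by
    have a1 : ∑ i, ∑ j, (∑ α, s i α * s j α) *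
          (∑ p, (ddY i j p * dk p + dY j p * D2 i p + dY i p * D2 j p + Yx p * D3 i j p))
        = ∑ p, ∑ i, ∑ j, (∑ α, s i α * s j α) *
          (ddY i j p * dk p + dY j p * D2 i p + dY i p * D2 j p + Yx p * D3 i j p) := by
      rw [← swap3 (fun i j p => (∑ α, s i α * s j α) *
          (ddY i j p * dk p + dY j p * D2 i p + dY i p * D2 j p + Yx p * D3 i j p))]
      exact Finset.sum_congr rfl fun i _ => Finset.sum_congr rfl fun j _ => Finset.mul_sum ..
    have a2 : ∑ i, u i * (∑ p, (dY i p * dk p + Yx p * D2 i p))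
        = ∑ p, ∑ i, u i * (dY i p * dk p + Yx p * D2 i p) := by
      rw [← swap2 (fun i p => u i * (dY i p * dk p + Yx p * D2 i p))]
      exact Finset.sum_congr rfl fun i _ => Finset.mul_sum ..
    rw [a1, a2, Finset.mul_sum, ← Finset.sum_add_distrib]
  -- Stage 2 : pointwise P p = Q p
  have stage2 : ∀ p, (1/2) * (∑ i, ∑ j, (∑ α, s i α * s j α) *
        (ddY i j p * dk p + dY j p * D2 i p + dY i p * D2 j p + Yx p * D3 i j p))
      + ∑ i, u i * (dY i p * dk p + Yx p * D2 i p)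
    =
      (∑ j, Yx j * dμ j p) * dk p
    - (∑ α, s p α * (∑ q, s q α * dk' q)) * dk p
    + τx * u p * dk p
    + (∑ i, ∑ α, s i α * ((∑ j, Yx j * dσ j p α) * D2 i p))
    + (∑ i, ∑ α, s i α * ((1/2) * τx * s p α * D2 i p))
    + (∑ i, ∑ α, s i α * ((∑ β, s p β * Cx β α) * D2 i p))
    - Yx p * ((1/2) * ∑ i, ∑ j, (∑ α, (dσ p i α * s j α + s i α * dσ p j α)) * D2 i j)
    - Yx p * (∑ i, dμ p i * dk i) := by
    intro p
    have hF4p := hF4 p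
    have ha : ∑ i, ∑ j, (∑ α, s i α * s j α) *
          (ddY i j p * dk p + dY j p * D2 i p + dY i p * D2 j p + Yx p * D3 i j p)
        = (∑ i, ∑ j, (∑ α, s i α * s j α) * ddY i j p) * dk p
          + (∑ i, ∑ j, (∑ α, s i α * s j α) * (dY j p * D2 i p))
          + (∑ i, ∑ j, (∑ α, s i α * s j α) * (dY i p * D2 j p))
          + Yx p * (∑ i, ∑ j, (∑ α, s i α * s j α) * D3 p i j) := by
      have e0 : ∑ i, ∑ j, (∑ α, s i α * s j α) *
            (ddY i j p * dk p + dY j p * D2 i p + dY i p * D2 j p + Yx p * D3 i j p)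
          = ∑ i, ∑ j, ((∑ α, s i α * s j α) * ddY i j p * dk p
            + (∑ α, s i α * s j α) * (dY j p * D2 i p)
            + (∑ α, s i α * s j α) * (dY i p * D2 j p)
            + Yx p * ((∑ α, s i α * s j α) * D3 p i j)) := by
        refine Finset.sum_congr rfl fun i _ => Finset.sum_congr rfl fun j _ => ?_
        rw [hD3 i j p]; ring
      rw [e0]
      simp only [Finset.sum_add_distrib]
      congr 1
      · congr 1
        · congr 1
          · rw [Finset.sum_mul]
            exact Finset.sum_congr rfl fun i _ => (Finset.sum_mul ..).symm
      · rw [Finset.mul_sum]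
        exact Finset.sum_congr rfl fun i _ => (Finset.mul_sum ..).symm
    have hu : ∑ i, u i * (dY i p * dk p + Yx p * D2 i p)
        = (∑ i, u i * dY i p) * dk p + Yx p * (∑ i, u i * D2 p i) := by
      have e0 : ∑ i, u i * (dY i p * dk p + Yx p * D2 i p)
          = ∑ i, (u i * dY i p * dk p + Yx p * (u i * D2 p i)) := by
        refine Finset.sum_congr rfl fun i _ => ?_
        rw [hD2 i p]; ring
      rw [e0]
      simp only [Finset.sum_add_distrib]
      congr 1
      · rw [Finset.sum_mul]
      · rw [Finset.mul_sum]
    have hcb : (∑ i, ∑ j, (∑ α, s i α * s j α) * (dY i p * D2 j p))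
        = ∑ i, ∑ j, (∑ α, s i α * s j α) * (dY j p * D2 i p) := by
      calc ∑ i, ∑ j, (∑ α, s i α * s j α) * (dY i p * D2 j p)
          = ∑ j, ∑ i, (∑ α, s i α * s j α) * (dY i p * D2 j p) := swap2 _
        _ = ∑ i, ∑ j, (∑ α, s j α * s i α) * (dY j p * D2 i p) := rfl
        _ = ∑ i, ∑ j, (∑ α, s i α * s j α) * (dY j p * D2 i p) := by
            refine Finset.sum_congr rfl fun i _ => Finset.sum_congr rfl fun j _ => ?_
            rw [hA i j]
    have hb3 : (∑ i, ∑ j, (∑ α, s i α * s j α) * (dY j p * D2 i p))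
        = ∑ i, ∑ α, s i α * ((∑ j, s j α * dY j p) * D2 i p) := by
      refine Finset.sum_congr rfl fun i _ => ?_
      calc ∑ j, (∑ α, s i α * s j α) * (dY j p * D2 i p)
          = ∑ j, ∑ α, s i α * s j α * (dY j p * D2 i p) :=
            Finset.sum_congr rfl fun j _ => Finset.sum_mul ..
        _ = ∑ α, ∑ j, s i α * s j α * (dY j p * D2 i p) := swap2 _
        _ = ∑ α, s i α * ((∑ j, s j α * dY j p) * D2 i p) := by
            refine Finset.sum_congr rfl fun α _ => ?_
            rw [Finset.sum_mul, Finset.mul_sum]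
            exact Finset.sum_congr rfl fun j _ => by ring
    have hb4 : (∑ i, ∑ α, s i α * ((∑ j, s j α * dY j p) * D2 i p))
        = (∑ i, ∑ α, s i α * ((∑ j, Yx j * dσ j p α) * D2 i p))
          + (∑ i, ∑ α, s i α * ((1/2) * τx * s p α * D2 i p))
          + (∑ i, ∑ α, s i α * ((∑ β, s p β * Cx β α) * D2 i p)) := by
      rw [← Finset.sum_add_distrib, ← Finset.sum_add_distrib]
      refine Finset.sum_congr rfl fun i _ => ?_
      rw [← Finset.sum_add_distrib, ← Finset.sum_add_distrib]
      refine Finset.sum_congr rfl fun α _ => ?_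
      linear_combination (-(s i α * D2 i p)) * (hE2 p α)
    have hbB := hb3.trans hb4
    have hcB := hcb.trans hbB
    have hf4 : (1/2) * (∑ i, ∑ j, (∑ α, (dσ p i α * s j α + s i α * dσ p j α)) * D2 i j)
        + (1/2) * (∑ i, ∑ j, (∑ α, s i α * s j α) * D3 p i j)
        + (∑ i, dμ p i * dk i) + (∑ i, u i * D2 p i) = 0 := by
      have s1 : ∑ i, ∑ j, ((∑ α, (dσ p i α * s j α + s i α * dσ p j α)) * D2 i j
            + (∑ α, s i α * s j α) * D3 p i j)
          = (∑ i, ∑ j, (∑ α, (dσ p i α * s j α + s i α * dσ p j α)) * D2 i j)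
            + (∑ i, ∑ j, (∑ α, s i α * s j α) * D3 p i j) := by
        simp [Finset.sum_add_distrib]
      have s2 : ∑ i, (dμ p i * dk i + u i * D2 p i)
          = (∑ i, dμ p i * dk i) + (∑ i, u i * D2 p i) := by
        simp [Finset.sum_add_distrib]
      rw [s1, s2] at hF4p
      linear_combination hF4p
    rw [ha, hu]
    linear_combination (-(dk p)) * hE1 p + Yx p * hf4 + (1/2) * hbB + (1/2) * hcB
  rw [stage1]
  rw [Finset.sum_congr rfl fun p _ => stage2 p]
  -- Global stage
  simp only [Finset.sum_add_distrib, Finset.sum_sub_distrib]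
  -- now a combination of eight global sums
  have gA : ∑ p, (∑ j, Yx j * dμ j p) * dk p = ∑ p, Yx p * (∑ i, dμ p i * dk i) := by
    calc ∑ p, (∑ j, Yx j * dμ j p) * dk p = ∑ p, ∑ j, Yx j * dμ j p * dk p :=
          Finset.sum_congr rfl fun p _ => Finset.sum_mul ..
      _ = ∑ j, ∑ p, Yx j * dμ j p * dk p := swap2 _
      _ = ∑ p, Yx p * (∑ i, dμ p i * dk i) := by
          refine Finset.sum_congr rfl fun p _ => ?_
          rw [Finset.mul_sum]
          exact Finset.sum_congr rfl fun i _ => by ring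
  have gB : ∑ p, (∑ α, s p α * (∑ q, s q α * dk' q)) * dk p
      = ∑ α, (∑ q, s q α * dk' q) * (∑ p, s p α * dk p) := by
    calc ∑ p, (∑ α, s p α * (∑ q, s q α * dk' q)) * dk p
        = ∑ p, ∑ α, s p α * (∑ q, s q α * dk' q) * dk p :=
          Finset.sum_congr rfl fun p _ => Finset.sum_mul ..
      _ = ∑ α, ∑ p, s p α * (∑ q, s q α * dk' q) * dk p := swap2 _
      _ = ∑ α, (∑ q, s q α * dk' q) * (∑ p, s p α * dk p) := by
          refine Finset.sum_congr rfl fun α _ => ?_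
          rw [Finset.mul_sum]
          exact Finset.sum_congr rfl fun p _ => by ring
  have gD : ∑ p, τx * u p * dk p
      + ∑ p, ∑ i, ∑ α, s i α * ((1/2) * τx * s p α * D2 i p) = 0 := by
    have h5 : ∑ p, ∑ i, ∑ α, s i α * ((1/2) * τx * s p α * D2 i p)
        = (1/2) * τx * ∑ i, ∑ j, (∑ α, s i α * s j α) * D2 i j := by
      calc ∑ p, ∑ i, ∑ α, s i α * ((1/2) * τx * s p α * D2 i p)
          = ∑ i, ∑ p, ∑ α, s i α * ((1/2) * τx * s p α * D2 i p) := swap2 _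
        _ = ∑ i, ∑ j, (1/2) * τx * ((∑ α, s i α * s j α) * D2 i j) := by
            refine Finset.sum_congr rfl fun i _ => Finset.sum_congr rfl fun j _ => ?_
            rw [Finset.sum_mul, Finset.mul_sum]
            exact Finset.sum_congr rfl fun α _ => by ring
        _ = (1/2) * τx * ∑ i, ∑ j, (∑ α, s i α * s j α) * D2 i j := by
            rw [Finset.mul_sum]
            exact Finset.sum_congr rfl fun i _ => (Finset.mul_sum ..).symm
    have h3 : ∑ p, τx * u p * dk p = τx * ∑ i, u i * dk i := by
      rw [Finset.mul_sum]; exact Finset.sum_congr rfl fun p _ => by ring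
    rw [h5, h3]
    linear_combination τx * hF3
  have gC : ∑ p, ∑ i, ∑ α, s i α * ((∑ j, Yx j * dσ j p α) * D2 i p)
      = ∑ p, Yx p * ((1/2) * ∑ i, ∑ j,
          ((∑ α, dσ p i α * s j α) + (∑ α, s i α * dσ p j α)) * D2 i j) := by
    have hL : ∑ p, ∑ i, ∑ α, s i α * ((∑ j, Yx j * dσ j p α) * D2 i p)
        = ∑ p, ∑ i, ∑ j, ∑ α, Yx p * (dσ p i α * (s j α * D2 i j)) := by
      calc ∑ p, ∑ i, ∑ α, s i α * ((∑ j, Yx j * dσ j p α) * D2 i p)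
          = ∑ p, ∑ i, ∑ α, ∑ j, s i α * (Yx j * dσ j p α * D2 i p) := by
            refine Finset.sum_congr rfl fun p _ => Finset.sum_congr rfl fun i _ =>
              Finset.sum_congr rfl fun α _ => ?_
            rw [Finset.sum_mul, Finset.mul_sum]
        _ = ∑ j, ∑ p, ∑ i, ∑ α, s i α * (Yx j * dσ j p α * D2 i p) := swap4 _
        _ = ∑ p, ∑ i, ∑ j, ∑ α, s j α * (Yx p * dσ p i α * D2 j i) := rfl
        _ = ∑ p, ∑ i, ∑ j, ∑ α, Yx p * (dσ p i α * (s j α * D2 i j)) := by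
            refine Finset.sum_congr rfl fun p _ => Finset.sum_congr rfl fun i _ =>
              Finset.sum_congr rfl fun j _ => Finset.sum_congr rfl fun α _ => ?_
            rw [hD2 j i]; ring
    have hR : ∀ p, Yx p * ((1/2) * ∑ i, ∑ j,
          ((∑ α, dσ p i α * s j α) + (∑ α, s i α * dσ p j α)) * D2 i j)
        = ∑ i, ∑ j, ∑ α, Yx p * (dσ p i α * (s j α * D2 i j)) := by
      intro p
      have e1 : ∑ i, ∑ j, ((∑ α, dσ p i α * s j α) + (∑ α, s i α * dσ p j α)) * D2 i j
          = ∑ i, ∑ j, ∑ α, (dσ p i α * s j α * D2 i j + s i α * dσ p j α * D2 i j) := by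
        refine Finset.sum_congr rfl fun i _ => Finset.sum_congr rfl fun j _ => ?_
        rw [add_mul, Finset.sum_mul, Finset.sum_mul, ← Finset.sum_add_distrib]
      have e2 : ∑ i, ∑ j, ∑ α, s i α * dσ p j α * D2 i j
          = ∑ i, ∑ j, ∑ α, dσ p i α * s j α * D2 i j := by
        calc ∑ i, ∑ j, ∑ α, s i α * dσ p j α * D2 i j
            = ∑ j, ∑ i, ∑ α, s i α * dσ p j α * D2 i j := swap2 _
          _ = ∑ i, ∑ j, ∑ α, s j α * dσ p i α * D2 j i := rfl
          _ = ∑ i, ∑ j, ∑ α, dσ p i α * s j α * D2 i j := by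
              refine Finset.sum_congr rfl fun i _ => Finset.sum_congr rfl fun j _ =>
                Finset.sum_congr rfl fun α _ => ?_
              rw [hD2 j i]; ring
      have e3 : ∑ i, ∑ j, ∑ α, (dσ p i α * s j α * D2 i j + s i α * dσ p j α * D2 i j)
          = ∑ i, ∑ j, ∑ α, dσ p i α * s j α * D2 i j
            + ∑ i, ∑ j, ∑ α, s i α * dσ p j α * D2 i j := by
        simp [Finset.sum_add_distrib]
      rw [e1, e3, e2]
      have hhalf : Yx p * ((1/2) * ((∑ i, ∑ j, ∑ α, dσ p i α * s j α * D2 i j)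
          + (∑ i, ∑ j, ∑ α, dσ p i α * s j α * D2 i j)))
          = Yx p * (∑ i, ∑ j, ∑ α, dσ p i α * s j α * D2 i j) := by ring
      rw [hhalf, Finset.mul_sum]
      refine Finset.sum_congr rfl fun i _ => ?_
      rw [Finset.mul_sum]
      refine Finset.sum_congr rfl fun j _ => ?_
      rw [Finset.mul_sum]
      refine Finset.sum_congr rfl fun α _ => ?_
      ring
    rw [hL]
    exact Finset.sum_congr rfl fun p _ => (hR p).symm
  have gE : ∑ p, ∑ i, ∑ α, s i α * ((∑ β, s p β * Cx β α) * D2 i p) = 0 := by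
    have expand : ∑ p, ∑ i, ∑ α, s i α * ((∑ β, s p β * Cx β α) * D2 i p)
        = ∑ p, ∑ i, ∑ α, ∑ β, s i α * (s p β * Cx β α) * D2 i p := by
      refine Finset.sum_congr rfl fun p _ => Finset.sum_congr rfl fun i _ =>
        Finset.sum_congr rfl fun α _ => ?_
      rw [Finset.sum_mul, Finset.mul_sum]
      exact Finset.sum_congr rfl fun β _ => by ring
    rw [expand]
    have flip : ∑ p, ∑ i, ∑ α, ∑ β, s i α * (s p β * Cx β α) * D2 i p
        = ∑ p, ∑ i, ∑ α, ∑ β, - (s i α * (s p β * Cx β α) * D2 i p) := by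
      calc ∑ p, ∑ i, ∑ α, ∑ β, s i α * (s p β * Cx β α) * D2 i p
          = ∑ i, ∑ p, ∑ α, ∑ β, s i α * (s p β * Cx β α) * D2 i p := swap2 _
        _ = ∑ i, ∑ p, ∑ β, ∑ α, s i α * (s p β * Cx β α) * D2 i p :=
            Finset.sum_congr rfl fun i _ => Finset.sum_congr rfl fun p _ => swap2 _
        _ = ∑ p, ∑ i, ∑ α, ∑ β, s p β * (s i α * Cx α β) * D2 p i := rfl
        _ = ∑ p, ∑ i, ∑ α, ∑ β, - (s i α * (s p β * Cx β α) * D2 i p) := by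
            refine Finset.sum_congr rfl fun p _ => Finset.sum_congr rfl fun i _ =>
              Finset.sum_congr rfl fun α _ => Finset.sum_congr rfl fun β _ => ?_
            rw [hC α β, hD2 p i]; ring
    have neg : ∑ p, ∑ i, ∑ α, ∑ β, - (s i α * (s p β * Cx β α) * D2 i p)
        = - ∑ p, ∑ i, ∑ α, ∑ β, s i α * (s p β * Cx β α) * D2 i p := by
      simp [Finset.sum_neg_distrib]
    linarith [flip, neg]
  linarith [gA, gB, gC, gD, gE]

lemma key {n m : ℕ} {M : Set (Fin n → ℝ)} (hM : IsOpen M)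
    (μ : (Fin n → ℝ) → Fin n → ℝ) (σ : (Fin n → ℝ) → Matrix (Fin n) (Fin m) ℝ)
    (hμ : ∀ i, ContDiffOn ℝ (⊤ : ℕ∞) (fun x => μ x i) M)
    (hσ : ∀ i j, ContDiffOn ℝ (⊤ : ℕ∞) (fun x => σ x i j) M)
    (Y : (Fin n → ℝ) → Fin n → ℝ) (C : (Fin n → ℝ) → Matrix (Fin m) (Fin m) ℝ)
    (τ : (Fin n → ℝ) → ℝ) (k k' : (Fin n → ℝ) → ℝ)
    (hY : ∀ i, ContDiffOn ℝ (⊤ : ℕ∞) (fun x => Y x i) M)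
    (hk : ContDiffOn ℝ (⊤ : ℕ∞) k M) (hk' : ContDiffOn ℝ (⊤ : ℕ∞) k' M)
    (hCas : ∀ x ∈ M, (C x)ᵀ = -(C x))
    (hsym : DetEqs M μ σ Y C τ (fun x α => ∑ p, σ x p α * pd p k' x))
    (hLk : ∀ x ∈ M, gen μ σ k x = 0) :
    ∀ x ∈ M, gen μ σ (fun y => vfd Y k y) x
      = - ∑ α, (∑ q, σ x q α * pd q k' x) * (∑ p, σ x p α * pd p k x) := by
  intro x hx
  -- Schwarz relations
  have hD2 : ∀ i q : Fin n, pd i (pd q k) x = pd q (pd i k) x :=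
    fun i q => pd_comm hM hk hx
  have hD3 : ∀ i j q : Fin n, pd i (pd j (pd q k)) x = pd q (pd i (pd j k)) x := by
    intro i j q
    have e1 : pd i (pd j (pd q k)) x = pd i (pd q (pd j k)) x :=
      pd_congr_on hM (fun y hy => pd_comm hM hk hy) hx
    rw [e1]
    exact pd_comm hM (cd_pd hM hk) hx
  -- antisymmetry of C at x
  have hCx : ∀ α β : Fin m, C x β α = - C x α β := by
    intro α β
    have := congrFun (congrFun (hCas x hx) α) β
    simpa [Matrix.transpose_apply, Matrix.neg_apply] using this
  -- determining equations at x
  have hE1 : ∀ p : Fin n, (∑ j, Y x j * pd j (fun y => μ y p) x)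
      - ((1/2) * ∑ i, ∑ j, (∑ α, σ x i α * σ x j α) * pd i (pd j (fun y => Y y p)) x
        + ∑ i, μ x i * pd i (fun y => Y y p) x)
      - (∑ α, σ x p α * (∑ q, σ x q α * pd q k' x)) + τ x * μ x p = 0 := by
    intro p
    have := hsym.1 x hx p
    simpa [vfd, gen] using this
  have hE2 : ∀ (p : Fin n) (α : Fin m), (∑ j, Y x j * pd j (fun y => σ y p α) x)
      - (∑ j, σ x j α * pd j (fun y => Y y p) x)
      + (1/2) * τ x * σ x p α + (∑ β, σ x p β * C x β α) = 0 := by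
    intro p α
    have := hsym.2 x hx p α
    simpa [vfd] using this
  -- L k = 0 at x
  have hF3 : (1/2) * ∑ i, ∑ j, (∑ α, σ x i α * σ x j α) * pd i (pd j k) x
      + ∑ i, μ x i * pd i k x = 0 := by
    have := hLk x hx
    simpa [gen] using this
  -- derivative of L k = 0
  have hF4 : ∀ p : Fin n, (1/2) * ∑ i, ∑ j,
      ((∑ α, (pd p (fun y => σ y i α) x * σ x j α + σ x i α * pd p (fun y => σ y j α) x))
          * pd i (pd j k) x
        + (∑ α, σ x i α * σ x j α) * pd p (pd i (pd j k)) x)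
      + ∑ i, (pd p (fun y => μ y i) x * pd i k x + μ x i * pd p (pd i k) x) = 0 := by
    intro p
    have h0 : pd p (fun y => gen μ σ k y) x = 0 := pd_zero_on hM hLk hx
    rw [pd_gen hM μ σ hμ hσ k hk hx p] at h0
    exact h0
  -- expand the generator of vfd Y k
  have hexp : gen μ σ (fun y => vfd Y k y) x
      = (1/2) * ∑ i, ∑ j, (∑ α, σ x i α * σ x j α) *
          (∑ p, (pd i (pd j (fun z => Y z p)) x * pd p k x
            + pd j (fun z => Y z p) x * pd i (pd p k) x
            + pd i (fun z => Y z p) x * pd j (pd p k) x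
            + Y x p * pd i (pd j (pd p k)) x))
        + ∑ i, μ x i * (∑ p, (pd i (fun z => Y z p) x * pd p k x
            + Y x p * pd i (pd p k) x)) := by
    simp only [gen]
    congr 1
    · congr 1
      refine Finset.sum_congr rfl fun i _ => Finset.sum_congr rfl fun j _ => ?_
      rw [pd_pd_vfd hM Y k hY hk hx i j]
    · refine Finset.sum_congr rfl fun i _ => ?_
      rw [pd_vfd hM Y k hY hk x hx i]
  rw [hexp]
  exact master (fun i α => σ x i α) (μ x) (Y x) (fun p => pd p k x) (fun q => pd q k' x)
    (fun a b => pd a (fun z => Y z b) x) (fun a b => pd a (fun y => μ y b) x)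
    (fun a b => pd a (pd b k) x)
    (fun a b c => pd a (pd b (fun z => Y z c)) x)
    (fun a b c => pd a (pd b (pd c k)) x)
    (fun a b α => pd a (fun y => σ y b α) x) (fun α β => C x α β) (τ x)
    hD2 hD3 hCx hE1 hE2 hF3 hF4

lemma gen_sub {n m : ℕ} {M : Set (Fin n → ℝ)} (hM : IsOpen M)
    {μ : (Fin n → ℝ) → Fin n → ℝ} {σ : (Fin n → ℝ) → Matrix (Fin n) (Fin m) ℝ}
    {f g : (Fin n → ℝ) → ℝ}
    (hf : ContDiffOn ℝ (⊤ : ℕ∞) f M) (hg : ContDiffOn ℝ (⊤ : ℕ∞) g M)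
    {x : Fin n → ℝ} (hx : x ∈ M) :
    gen μ σ (fun y => f y - g y) x = gen μ σ f x - gen μ σ g x := by
  have e1 : ∀ i : Fin n, pd i (fun y => f y - g y) x = pd i f x - pd i g x :=
    fun i => pd_sub (dAt hM hf hx) (dAt hM hg hx)
  have e2 : ∀ i j : Fin n, pd i (pd j (fun y => f y - g y)) x
      = pd i (pd j f) x - pd i (pd j g) x := by
    intro i j
    have h1 : pd i (pd j (fun y => f y - g y)) x
        = pd i (fun y => pd j f y - pd j g y) x :=
      pd_congr_on hM (fun y hy => pd_sub (dAt hM hf hy) (dAt hM hg hy)) hx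
    rw [h1]
    exact pd_sub (dAt hM (cd_pd hM hf) hx) (dAt hM (cd_pd hM hg) hx)
  simp only [gen, e1, e2, mul_sub, Finset.sum_sub_distrib]
  ring

/-- The bracket of two Doob symmetries is a Doob symmetry: if `V_i = (Y_i,C_i,τ_i,σᵀ∇k_i)`
are infinitesimal symmetries of `(μ,σ)` with `L(k₁) = L(k₂) = 0`, then also
`L(Y₁(k₂) − Y₂(k₁)) = 0`. -/
theorem statement11 {n m : ℕ} (M : Set (Fin n → ℝ)) (hM : IsOpen M)
    (μ : (Fin n → ℝ) → Fin n → ℝ) (σ : (Fin n → ℝ) → Matrix (Fin n) (Fin m) ℝ)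
    (hμ : SmoothVec M μ) (hσ : SmoothMat M σ)
    (Y₁ Y₂ : (Fin n → ℝ) → Fin n → ℝ)
    (C₁ C₂ : (Fin n → ℝ) → Matrix (Fin m) (Fin m) ℝ)
    (τ₁ τ₂ : (Fin n → ℝ) → ℝ) (k₁ k₂ : (Fin n → ℝ) → ℝ)
    (hY₁ : SmoothVec M Y₁) (hY₂ : SmoothVec M Y₂)
    (hC₁s : SmoothMat M C₁) (hC₂s : SmoothMat M C₂)
    (hτ₁ : ContDiffOn ℝ (⊤ : ℕ∞) τ₁ M) (hτ₂ : ContDiffOn ℝ (⊤ : ℕ∞) τ₂ M)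
    (hk₁ : ContDiffOn ℝ (⊤ : ℕ∞) k₁ M) (hk₂ : ContDiffOn ℝ (⊤ : ℕ∞) k₂ M)
    (hC₁ : ∀ x ∈ M, (C₁ x)ᵀ = -(C₁ x)) (hC₂ : ∀ x ∈ M, (C₂ x)ᵀ = -(C₂ x))
    (hsym₁ : DetEqs M μ σ Y₁ C₁ τ₁ (fun x α => ∑ p, σ x p α * pd p k₁ x))
    (hsym₂ : DetEqs M μ σ Y₂ C₂ τ₂ (fun x α => ∑ p, σ x p α * pd p k₂ x))
    (hL₁ : ∀ x ∈ M, gen μ σ k₁ x = 0) (hL₂ : ∀ x ∈ M, gen μ σ k₂ x = 0) :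
    ∀ x ∈ M, gen μ σ (fun y => vfd Y₁ k₂ y - vfd Y₂ k₁ y) x = 0 := by
  intro x hx
  have K1 := key hM μ σ hμ hσ Y₁ C₁ τ₁ k₂ k₁ hY₁ hk₂ hk₁ hC₁ hsym₁ hL₂ x hx
  have K2 := key hM μ σ hμ hσ Y₂ C₂ τ₂ k₁ k₂ hY₂ hk₁ hk₂ hC₂ hsym₂ hL₁ x hx
  have hsub : gen μ σ (fun y => vfd Y₁ k₂ y - vfd Y₂ k₁ y) x
      = gen μ σ (fun y => vfd Y₁ k₂ y) x - gen μ σ (fun y => vfd Y₂ k₁ y) x :=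
    gen_sub hM (cd_vfd hM Y₁ k₂ hY₁ hk₂) (cd_vfd hM Y₂ k₁ hY₂ hk₁) hx
  have hΓ : (∑ α, (∑ q, σ x q α * pd q k₁ x) * (∑ p, σ x p α * pd p k₂ x))
      = ∑ α, (∑ q, σ x q α * pd q k₂ x) * (∑ p, σ x p α * pd p k₁ x) :=
    Finset.sum_congr rfl fun α _ => mul_comm _ _
  rw [hsub, K1, K2]
  linarith [hΓ]
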